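/- Let u ∈ L²(ℝ) with u ≠ 0, let s > 0, and let c : ℤ → ℂ be a finitely supported sequence belonging to ℓ²_O(ℤ). Then the functions f = Σ_{k∈ℤ} c_k M_{sk} u and f_× = Σ_{k∈ℤ} conj(c_k) M_{sk} u do not agree up to a global phase: there is no ν ∈ ℂ with |ν| = 1 and f = ν·f_×. (This is the case θ = π/2 of the non-equivalence theorem, since the fractional Fourier shift of order π/2 is the modulation operator.) -/

import Mathlib

open MeasureTheory Complex Real

/-- The short-time Fourier transform of `f ∈ L²(ℝ)` with respect to the window `g ∈ L²(ℝ)`: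
`V_g f (x, ω) = ∫ f(t) conj(g(t-x)) e^{-2πiωt} dt`. -/
noncomputable def STFT (g f : Lp ℂ 2 (volume : Measure ℝ)) (x ω : ℝ) : ℂ :=
  ∫ t : ℝ, f t * (starRingEnd ℂ) (g (t - x)) * Complex.exp (-2 * Real.pi * Complex.I * ω * t)

/-- `f` and `h` agree up to a global phase: `f = ν • h` for some unimodular `ν ∈ ℂ`. -/
def SamePhase (f h : Lp ℂ 2 (volume : Measure ℝ)) : Prop :=
  ∃ ν : ℂ, ‖ν‖ = 1 ∧ f = ν • h

/-- Modulation operator `M_ν` on `L²(ℝ)`: `(M_ν f)(t) = e^{2πiνt} f(t)`. -/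
noncomputable def Modulate (ν : ℝ) (f : Lp ℂ 2 (volume : Measure ℝ)) :
    Lp ℂ 2 (volume : Measure ℝ) :=
  MemLp.toLp (fun t : ℝ => Complex.exp (2 * Real.pi * Complex.I * ν * t) * f t) <| by
    refine MemLp.of_le (Lp.memLp f) ?_ ?_
    · exact (Complex.continuous_exp.comp (by continuity)).aestronglyMeasurable.mul
        (Lp.aestronglyMeasurable f)
    · refine Filter.Eventually.of_forall fun t => ?_
      rw [norm_mul]
      have h1 : ‖Complex.exp (2 * Real.pi * Complex.I * (ν : ℂ) * (t : ℂ))‖ = 1 := by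
        rw [Complex.norm_exp]
        norm_num [Complex.exp_re]
      rw [h1, one_mul]

/-- The values of the sequence `c : ℤ → ℂ` do not all lie on a single line through the
origin of the complex plane (the defining property of `ℓ²_𝒪(ℤ)`). -/
def NotOnLine (c : ℤ → ℂ) : Prop :=
  ¬ ∃ α : ℝ, ∀ k : ℤ, ∃ r : ℝ, c k = Complex.exp (α * Complex.I) * r

/-- If `u ≠ 0`, `s > 0` and `c` is a finitely supported sequence whose values do not all lie on
a line through the origin, then `f = ∑ₖ cₖ M_{sk} u` and `f_× = ∑ₖ conj(cₖ) M_{sk} u` do not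
agree up to a global phase. -/

lemma countable_exp_eq (s : ℝ) (hs : s ≠ 0) (z : ℂ) :
    Set.Countable {t : ℝ | Complex.exp (2 * Real.pi * Complex.I * s * t) = z} := by
  rcases Set.eq_empty_or_nonempty {t : ℝ | Complex.exp (2 * Real.pi * Complex.I * s * t) = z}
    with h | ⟨t₀, ht₀⟩
  · rw [h]; exact Set.countable_empty
  · have : {t : ℝ | Complex.exp (2 * Real.pi * Complex.I * s * t) = z} ⊆
        Set.range (fun n : ℤ => t₀ + n / s) := by
      intro t ht
      simp only [Set.mem_setOf_eq] at ht ht₀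
      rw [← ht₀, Complex.exp_eq_exp_iff_exists_int] at ht
      obtain ⟨n, hn⟩ := ht
      refine ⟨n, ?_⟩
      have hkey : (2 * Real.pi * Complex.I) * (s * t) = (2 * Real.pi * Complex.I) * (s * t₀ + n) := by
        linear_combination hn
      have h2πI : (2 * (Real.pi : ℂ) * Complex.I) ≠ 0 := by
        simp [Real.pi_ne_zero, Complex.I_ne_zero]
      have h2 : (s : ℂ) * t = s * t₀ + n := mul_left_cancel₀ h2πI hkey
      have h3 : ((s * t : ℝ) : ℂ) = ((s * t₀ + n : ℝ) : ℂ) := by push_cast; exact h2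
      have h4 : s * t = s * t₀ + n := Complex.ofReal_inj.mp h3
      field_simp
      linarith
    exact Set.Countable.mono this (Set.countable_range _)

lemma countable_trigpoly (s : ℝ) (hs : s ≠ 0) (S : Finset ℤ) (a : ℤ → ℂ)
    (k₀ : ℤ) (hk₀ : k₀ ∈ S) (ha : a k₀ ≠ 0) :
    Set.Countable {t : ℝ |
      ∑ k ∈ S, a k * Complex.exp (2 * Real.pi * Complex.I * (s * k) * t) = 0} := by
  have hSne : S.Nonempty := ⟨k₀, hk₀⟩
  set m := S.min' hSne with hm
  have hmle : ∀ k ∈ S, m ≤ k := fun k hk => S.min'_le k hk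
  set q : Polynomial ℂ := ∑ k ∈ S, Polynomial.C (a k) * Polynomial.X ^ (k - m).toNat with hq
  have hqne : q ≠ 0 := by
    intro h0
    have hcoeff : q.coeff (k₀ - m).toNat = a k₀ := by
      rw [hq, Polynomial.finset_sum_coeff]
      rw [Finset.sum_eq_single k₀]
      · simp [Polynomial.coeff_C_mul, Polynomial.coeff_X_pow]
      · intro k hk hne
        have h1 : (k - m).toNat ≠ (k₀ - m).toNat := by
          have := hmle k hk; have := hmle k₀ hk₀; omega
        rw [Polynomial.coeff_C_mul, Polynomial.coeff_X_pow, if_neg (fun h => h1 h.symm),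
          mul_zero]
      · intro h; exact absurd hk₀ h
    rw [h0] at hcoeff; simp at hcoeff; exact ha hcoeff.symm
  have hZ : Set.Finite {x : ℂ | q.IsRoot x} := Polynomial.finite_setOf_isRoot hqne
  have hsub : {t : ℝ |
      ∑ k ∈ S, a k * Complex.exp (2 * Real.pi * Complex.I * (s * k) * t) = 0} ⊆
      ⋃ z ∈ {x : ℂ | q.IsRoot x},
        {t : ℝ | Complex.exp (2 * Real.pi * Complex.I * s * t) = z} := by
    intro t ht
    simp only [Set.mem_setOf_eq] at ht
    set e : ℂ := Complex.exp (2 * Real.pi * Complex.I * s * t) with he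
    have heval : q.eval e * Complex.exp (2 * Real.pi * Complex.I * (s * m) * t) = 0 := by
      rw [hq, Polynomial.eval_finset_sum, Finset.sum_mul, ← ht]
      refine Finset.sum_congr rfl fun k hk => ?_
      simp only [Polynomial.eval_mul, Polynomial.eval_C, Polynomial.eval_pow,
        Polynomial.eval_X]
      rw [he, ← Complex.exp_nat_mul, mul_assoc, ← Complex.exp_add]
      congr 1
      have h2 := hmle k hk
      have : ((k - m).toNat : ℂ) = (k : ℂ) - m := by
        rw [← Int.cast_natCast (R := ℂ), Int.toNat_of_nonneg (by omega : (0:ℤ) ≤ k - m)]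
        push_cast; ring
      rw [this]; ring
    have hroot : q.IsRoot e := by
      have := mul_eq_zero.mp heval
      rcases this with h | h
      · exact h
      · exact absurd h (Complex.exp_ne_zero _)
    exact Set.mem_biUnion hroot rfl
  exact Set.Countable.mono hsub (hZ.countable.biUnion fun z _ => countable_exp_eq s hs z)

lemma coeFn_sum_ae {ι : Type*} (S : Finset ι) (g : ι → Lp ℂ 2 (volume : Measure ℝ))
    (h : ι → ℝ → ℂ) (hg : ∀ k ∈ S, ⇑(g k) =ᵐ[volume] h k) :
    ⇑(∑ k ∈ S, g k) =ᵐ[volume] fun t => ∑ k ∈ S, h k t := by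
  classical
  induction S using Finset.induction_on with
  | empty => simp only [Finset.sum_empty]; exact Lp.coeFn_zero ℂ 2 (volume : Measure ℝ)
  | @insert i S hi ih =>
    rw [Finset.sum_insert hi]
    have h1 := Lp.coeFn_add (g i) (∑ k ∈ S, g k)
    have h2 := ih fun k hk => hg k (Finset.mem_insert_of_mem hk)
    have h3 := hg i (Finset.mem_insert_self i S)
    filter_upwards [h1, h2, h3] with t e1 e2 e3
    simp only [e1, Pi.add_apply, e2, e3, Finset.sum_insert hi]

set_option maxHeartbeats 1600000 in
theorem stmt9 (u : Lp ℂ 2 (volume : Measure ℝ)) (hu : u ≠ 0) (s : ℝ) (hs : 0 < s)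
    (c : ℤ →₀ ℂ) (hc : NotOnLine fun k => c k) :
    ¬ SamePhase (∑ k ∈ c.support, c k • Modulate (s * k) u)
      (∑ k ∈ c.support, (starRingEnd ℂ) (c k) • Modulate (s * k) u) := by
  rintro ⟨ν, hν, heq⟩
  classical
  set a : ℤ → ℂ := fun k => c k - ν * (starRingEnd ℂ) (c k) with ha
  have hsum0 : (∑ k ∈ c.support, a k • Modulate (s * k) u) = 0 := by
    have hterm : ∀ k ∈ c.support, a k • Modulate (s * k) u
        = c k • Modulate (s * k) u - ν • ((starRingEnd ℂ) (c k) • Modulate (s * k) u) := by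
      intro k _; rw [ha]; rw [sub_smul, smul_smul]
    rw [Finset.sum_congr rfl hterm, Finset.sum_sub_distrib, ← Finset.smul_sum, ← heq, sub_self]
  by_cases hall : ∀ k ∈ c.support, a k = 0
  · apply hc
    set α := ν.arg / 2 with hα
    have hνe : ν = Complex.exp (ν.arg * Complex.I) := by
      have h1 := Complex.norm_mul_exp_arg_mul_I ν
      rw [hν] at h1
      simpa using h1.symm
    have hνα : ν = Complex.exp (α * Complex.I) * Complex.exp (α * Complex.I) := by
      rw [← Complex.exp_add, hνe]
      congr 1
      push_cast [hα]
      ring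
    have hx : Complex.exp (-(α * Complex.I)) * Complex.exp (α * Complex.I) = 1 := by
      rw [← Complex.exp_add]; simp
    refine ⟨α, fun k => ?_⟩
    by_cases hk : k ∈ c.support
    · have hck : (c k : ℂ) = ν * (starRingEnd ℂ) (c k) := by
        have := hall k hk; rw [ha] at this; simp only [sub_eq_zero] at this; exact this
      have hconjexp : (starRingEnd ℂ) (Complex.exp (-(α * Complex.I))) =
          Complex.exp (α * Complex.I) := by
        rw [← Complex.exp_conj]; congr 1
        simp [Complex.conj_I]
      have hreal : (starRingEnd ℂ) (Complex.exp (-(α * Complex.I)) * c k)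
          = Complex.exp (-(α * Complex.I)) * c k := by
        rw [map_mul, hconjexp]
        calc Complex.exp (α * Complex.I) * (starRingEnd ℂ) (c k)
            = Complex.exp (-(α * Complex.I)) *
              (Complex.exp (α * Complex.I) * Complex.exp (α * Complex.I)
                * (starRingEnd ℂ) (c k)) := by
              rw [show Complex.exp (-(α * Complex.I)) *
                (Complex.exp (α * Complex.I) * Complex.exp (α * Complex.I)
                  * (starRingEnd ℂ) (c k)) =
                (Complex.exp (-(α * Complex.I)) * Complex.exp (α * Complex.I)) *
                  (Complex.exp (α * Complex.I) * (starRingEnd ℂ) (c k)) by ring, hx, one_mul]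
          _ = Complex.exp (-(α * Complex.I)) * c k := by rw [← hνα, ← hck]
      obtain ⟨r, hr⟩ := Complex.conj_eq_iff_real.mp hreal
      refine ⟨r, ?_⟩
      have : c k = Complex.exp (α * Complex.I) *
          (Complex.exp (-(α * Complex.I)) * c k) := by
        rw [show Complex.exp (α * Complex.I) * (Complex.exp (-(α * Complex.I)) * c k)
          = (Complex.exp (-(α * Complex.I)) * Complex.exp (α * Complex.I)) * c k by ring,
          hx, one_mul]
      show c k = Complex.exp (α * Complex.I) * r
      rw [this, hr]
    · refine ⟨0, ?_⟩
      show c k = Complex.exp (α * Complex.I) * ((0 : ℝ) : ℂ)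
      rw [Finsupp.notMem_support_iff.mp hk]
      simp
  · push_neg at hall
    obtain ⟨k₀, hk₀, hak₀⟩ := hall
    have hae1 : ∀ k ∈ c.support, ⇑(a k • Modulate (s * k) u) =ᵐ[volume]
        fun t : ℝ => a k * (Complex.exp (2 * Real.pi * Complex.I * ((s * (k:ℝ) : ℝ) : ℂ) * t) * u t) := by
      intro k _
      have hM : ⇑(Modulate (s * (k : ℤ)) u) =ᵐ[volume]
          fun t : ℝ => Complex.exp (2 * Real.pi * Complex.I * ((s * (k:ℝ) : ℝ) : ℂ) * t) * u t := by
        unfold Modulate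
        apply MemLp.coeFn_toLp
      filter_upwards [Lp.coeFn_smul (a k) (Modulate (s * k) u), hM] with t e1 e2
      rw [e1, Pi.smul_apply, e2, smul_eq_mul]
    have hae2 := coeFn_sum_ae c.support _ _ hae1
    rw [hsum0] at hae2
    have h0 : ∀ᵐ t : ℝ, ∑ k ∈ c.support,
        a k * (Complex.exp (2 * Real.pi * Complex.I * ((s * (k:ℝ) : ℝ) : ℂ) * t) * u t) = 0 := by
      filter_upwards [hae2, Lp.coeFn_zero ℂ 2 (volume : Measure ℝ)] with t e1 e2
      rw [← e1, e2]; rfl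
    set N := {t : ℝ | ∑ k ∈ c.support,
        a k * Complex.exp (2 * Real.pi * Complex.I * (s * (k : ℂ)) * t) = 0} with hN
    have hNc : Set.Countable N := by
      have := countable_trigpoly s (ne_of_gt hs) c.support a k₀ hk₀ hak₀
      exact this
    have hNm : volume N = 0 := Set.Countable.measure_zero hNc _
    have hu0 : ∀ᵐ t : ℝ, (u : ℝ → ℂ) t = 0 := by
      have hNae : ∀ᵐ t : ℝ, t ∉ N := (MeasureTheory.measure_eq_zero_iff_ae_notMem).mp hNm
      filter_upwards [h0, hNae] with t h1 h2
      have hP : (∑ k ∈ c.support,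
          a k * Complex.exp (2 * Real.pi * Complex.I * (s * (k : ℂ)) * t)) * u t = 0 := by
        rw [Finset.sum_mul]
        rw [← h1]
        refine Finset.sum_congr rfl fun k _ => ?_
        push_cast
        ring
      rcases mul_eq_zero.mp hP with h | h
      · exact absurd h h2
      · exact h
    exact hu (MeasureTheory.Lp.eq_zero_iff_ae_eq_zero.mpr hu0)
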